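/- Let μ be a finite Borel measure on [ℓ, c], a > 0, and let g : [ℓ, c] → ℝ be a bounded measurable solution of g(x) = a + ∫_{[ℓ, x]} (x − y) g(y) dμ(y). Then g(x) ≥ a for all x, g is nondecreasing, and g is convex on [ℓ, c]. -/

import Mathlib

open MeasureTheory Set

lemma stmt8_int {μ : Measure ℝ} [IsFiniteMeasure μ] {s : Set ℝ} (hs : MeasurableSet s)
    {f : ℝ → ℝ} (hf : Measurable f) {D : ℝ} (hD : ∀ x ∈ s, |f x| ≤ D) :
    IntegrableOn f s μ := by
  apply Integrable.mono' (integrable_const D) hf.aestronglyMeasurable.restrict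
  filter_upwards [ae_restrict_mem hs] with x hx using by simpa using hD x hx

/-- solutions of the Volterra equation with a > 0 are ≥ a,
nondecreasing and convex on [ℓ, c]. -/
theorem stmt8 (μ : Measure ℝ) [IsFiniteMeasure μ] (ℓ c a : ℝ) (ha : 0 < a)
    (g : ℝ → ℝ) (hgm : Measurable g)
    (hgb : ∃ C : ℝ, ∀ x ∈ Icc ℓ c, |g x| ≤ C)
    (hg : ∀ x ∈ Icc ℓ c, g x = a + ∫ y in Icc ℓ x, (x - y) * g y ∂μ) :
    (∀ x ∈ Icc ℓ c, a ≤ g x) ∧ MonotoneOn g (Icc ℓ c) ∧ ConvexOn ℝ (Icc ℓ c) g := by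
  obtain ⟨C, hC⟩ := hgb
  by_cases hlc : ℓ ≤ c
  swap
  · have he : Icc ℓ c = (∅ : Set ℝ) := Icc_eq_empty hlc
    refine ⟨?_, ?_, convex_Icc ℓ c, ?_⟩ <;> intro x hx <;> rw [he] at hx <;> exact absurd hx (notMem_empty x)
  -- setup
  set C0 : ℝ := max C 0 with hC0def
  have hC0 : ∀ x ∈ Icc ℓ c, |g x| ≤ C0 := fun x hx => (hC x hx).trans (le_max_left _ _)
  have hC0nn : (0:ℝ) ≤ C0 := le_max_right _ _
  set M : ℝ := (μ Set.univ).toReal with hMdef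
  have hMnn : (0:ℝ) ≤ M := ENNReal.toReal_nonneg
  have hμs : ∀ s : Set ℝ, (μ s).toReal ≤ M :=
    fun s => ENNReal.toReal_mono (measure_ne_top μ _) (measure_mono (subset_univ s))
  -- measurability of integrands
  have hm1 : ∀ x : ℝ, Measurable (fun y => (x - y) * g y) :=
    fun x => (measurable_const.sub measurable_id).mul hgm
  -- integrability of integrands over measurable subsets of Icc ℓ c
  have hint : ∀ (x : ℝ) (s : Set ℝ), MeasurableSet s → s ⊆ Icc ℓ c → x ∈ Icc ℓ c →
      IntegrableOn (fun y => (x - y) * g y) s μ := by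
    intro x s hs hsub hx
    refine stmt8_int hs (hm1 x) (D := (c - ℓ) * C0) ?_
    intro y hy
    have hy' := hsub hy
    rw [abs_mul]
    have h1 : |x - y| ≤ c - ℓ := by
      rw [abs_le]
      constructor <;> [nlinarith [hx.1, hx.2, hy'.1, hy'.2]; nlinarith [hx.1, hx.2, hy'.1, hy'.2]]
    exact mul_le_mul h1 (hC0 y hy') (abs_nonneg _) (by linarith)
  have hintg : ∀ (s : Set ℝ), MeasurableSet s → s ⊆ Icc ℓ c → IntegrableOn g s μ := by
    intro s hs hsub
    exact stmt8_int hs hgm (D := C0) (fun y hy => hC0 y (hsub hy))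
  -- difference formula
  have hdiff : ∀ u v : ℝ, u ∈ Icc ℓ c → v ∈ Icc ℓ c → u ≤ v →
      g v - g u = (v - u) * ∫ y in Icc ℓ u, g y ∂μ + ∫ y in Ioc u v, (v - y) * g y ∂μ := by
    intro u v hu hv huv
    have hsub1 : Icc ℓ u ⊆ Icc ℓ c := Icc_subset_Icc le_rfl hu.2
    have hsub2 : Ioc u v ⊆ Icc ℓ c := fun y hy => ⟨hu.1.trans hy.1.le, hy.2.trans hv.2⟩
    have hI1 : IntegrableOn (fun y => (v - y) * g y) (Icc ℓ u) μ :=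
      hint v _ measurableSet_Icc hsub1 hv
    have hI2 : IntegrableOn (fun y => (u - y) * g y) (Icc ℓ u) μ :=
      hint u _ measurableSet_Icc hsub1 hu
    have hI3 : IntegrableOn (fun y => (v - y) * g y) (Ioc u v) μ :=
      hint v _ measurableSet_Ioc hsub2 hv
    have hdisj : Disjoint (Icc ℓ u) (Ioc u v) := by
      rw [Set.disjoint_left]; intro y hy hy'; exact absurd hy.2 (not_le.2 hy'.1)
    have hsplit : Icc ℓ u ∪ Ioc u v = Icc ℓ v := Icc_union_Ioc_eq_Icc hu.1 huv
    have key : ∫ y in Icc ℓ v, (v - y) * g y ∂μ =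
        ∫ y in Icc ℓ u, (v - y) * g y ∂μ + ∫ y in Ioc u v, (v - y) * g y ∂μ := by
      rw [← hsplit]
      exact setIntegral_union hdisj measurableSet_Ioc hI1 hI3
    have key2 : ∫ y in Icc ℓ u, (v - y) * g y ∂μ - ∫ y in Icc ℓ u, (u - y) * g y ∂μ
        = (v - u) * ∫ y in Icc ℓ u, g y ∂μ := by
      rw [← integral_sub hI1 hI2, ← integral_const_mul]
      exact integral_congr_ae (Filter.Eventually.of_forall fun y => by ring)
    rw [hg v hv, hg u hu, key]
    linarith
  -- Lipschitz-type lower bound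
  set L : ℝ := 2 * C0 * M with hLdef
  have hLnn : 0 ≤ L := by positivity
  have hLip : ∀ u v : ℝ, u ∈ Icc ℓ c → v ∈ Icc ℓ c → u ≤ v →
      g u - L * (v - u) ≤ g v := by
    intro u v hu hv huv
    have hd := hdiff u v hu hv huv
    have hb1 : |∫ y in Icc ℓ u, g y ∂μ| ≤ C0 * M := by
      have := norm_setIntegral_le_of_norm_le_const (μ := μ) (s := Icc ℓ u) (C := C0) (f := g)
        (measure_lt_top μ _) (fun y hy => by
          simpa using hC0 y (Icc_subset_Icc le_rfl hu.2 hy))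
      calc |∫ y in Icc ℓ u, g y ∂μ| ≤ C0 * (μ (Icc ℓ u)).toReal := by simpa [Measure.real] using this
        _ ≤ C0 * M := mul_le_mul_of_nonneg_left (hμs _) hC0nn
    have hb2 : |∫ y in Ioc u v, (v - y) * g y ∂μ| ≤ (v - u) * C0 * M := by
      have hsub2 : Ioc u v ⊆ Icc ℓ c := fun y hy => ⟨hu.1.trans hy.1.le, hy.2.trans hv.2⟩
      have := norm_setIntegral_le_of_norm_le_const (μ := μ) (s := Ioc u v)
        (C := (v - u) * C0) (f := fun y => (v - y) * g y) (measure_lt_top μ _) (fun y hy => by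
          rw [Real.norm_eq_abs, abs_mul]
          have h1 : |v - y| ≤ v - u := by
            rw [abs_le]
            constructor <;> [nlinarith [hy.1.le, hy.2]; nlinarith [hy.1.le, hy.2]]
          exact mul_le_mul h1 (hC0 y (hsub2 hy)) (abs_nonneg _) (by nlinarith [hy.1.le, hy.2]))
      calc |∫ y in Ioc u v, (v - y) * g y ∂μ| ≤ (v - u) * C0 * (μ (Ioc u v)).toReal := by
            simpa [Measure.real] using this
        _ ≤ (v - u) * C0 * M :=
            mul_le_mul_of_nonneg_left (hμs _) (mul_nonneg (sub_nonneg.2 huv) hC0nn)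
    have h1 := abs_le.1 hb1
    have h2 := abs_le.1 hb2
    have hvu : 0 ≤ v - u := sub_nonneg.2 huv
    nlinarith [h1.1, h2.1]
  -- key nonnegativity propagation
  have key : ∀ x ∈ Icc ℓ c, (∀ t ∈ Ico ℓ x, 0 ≤ g t) → a ≤ g x := by
    intro x hx h
    rw [hg x hx]
    have h0 : 0 ≤ ∫ y in Icc ℓ x, (x - y) * g y ∂μ := by
      apply setIntegral_nonneg measurableSet_Icc
      intro y hy
      rcases eq_or_lt_of_le hy.2 with hxy | hxy
      · simp [hxy]
      · exact mul_nonneg (by linarith) (h y ⟨hy.1, hxy⟩)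
    linarith
  -- positivity via sSup argument
  have hga : ∀ x ∈ Icc ℓ c, a ≤ g x := by
    set P : Set ℝ := {x | x ∈ Icc ℓ c ∧ ∀ t ∈ Icc ℓ x, a ≤ g t} with hPdef
    have hℓP : ℓ ∈ P := by
      refine ⟨⟨le_rfl, hlc⟩, fun t ht => ?_⟩
      have htl : t = ℓ := le_antisymm ht.2 ht.1
      subst htl
      exact key t ⟨le_rfl, hlc⟩ (fun u hu => absurd hu.2 (not_lt.2 hu.1))
    have hbdd : BddAbove P := ⟨c, fun x hx => hx.1.2⟩
    have hne : P.Nonempty := ⟨ℓ, hℓP⟩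
    set s := sSup P with hsdef
    have hls : ℓ ≤ s := le_csSup hbdd hℓP
    have hsc : s ≤ c := csSup_le hne (fun x hx => hx.1.2)
    have hgs_lt : ∀ t, ℓ ≤ t → t < s → a ≤ g t := by
      intro t htl hts
      obtain ⟨x, hxP, htx⟩ := exists_lt_of_lt_csSup hne hts
      exact hxP.2 t ⟨htl, htx.le⟩
    have hgs : a ≤ g s :=
      key s ⟨hls, hsc⟩ (fun t ht => le_trans ha.le (hgs_lt t ht.1 ht.2))
    have hsP : s ∈ P := by
      refine ⟨⟨hls, hsc⟩, fun t ht => ?_⟩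
      rcases eq_or_lt_of_le ht.2 with h | h
      · subst h; exact hgs
      · exact hgs_lt t ht.1 h
    have hsceq : s = c := by
      by_contra hne'
      have hslt : s < c := lt_of_le_of_ne hsc hne'
      set δ : ℝ := a / (2 * (L + 1)) with hδdef
      have hδpos : 0 < δ := by positivity
      set x := min c (s + δ) with hxdef
      have hsx : s < x := lt_min hslt (by linarith)
      have hxc : x ≤ c := min_le_left _ _
      have hxsδ : x ≤ s + δ := min_le_right _ _
      have hxIcc : x ∈ Icc ℓ c := ⟨hls.trans hsx.le, hxc⟩
      have hpos : ∀ t, s < t → t ≤ x → a / 2 ≤ g t := by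
        intro t hst htx
        have htIcc : t ∈ Icc ℓ c := ⟨hls.trans hst.le, htx.trans hxc⟩
        have hl := hLip s t ⟨hls, hsc⟩ htIcc hst.le
        have hts : t - s ≤ δ := by linarith
        have : L * (t - s) ≤ L * δ := by nlinarith [sub_nonneg.2 hst.le]
        have hEq : (L + 1) * δ = a / 2 := by
          rw [hδdef]; field_simp
        have hLδ : L * δ ≤ a / 2 := by nlinarith [hδpos]
        linarith
      have hallpos : ∀ t, s < t → t ≤ x → a ≤ g t := by
        intro t hst htx
        have htIcc : t ∈ Icc ℓ c := ⟨hls.trans hst.le, htx.trans hxc⟩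
        refine key t htIcc (fun u hu => ?_)
        rcases le_or_gt u s with h | h
        · exact le_trans ha.le (hsP.2 u ⟨hu.1, h⟩)
        · exact le_trans (by linarith) (hpos u h (hu.2.le.trans htx))
      have hxP : x ∈ P := by
        refine ⟨hxIcc, fun t ht => ?_⟩
        rcases le_or_gt t s with h | h
        · exact hsP.2 t ⟨ht.1, h⟩
        · exact hallpos t h ht.2
      have := le_csSup hbdd hxP
      linarith
    intro x hx
    exact hsP.2 x ⟨hx.1, hsceq ▸ hx.2⟩
  -- monotonicity
  have hmono : MonotoneOn g (Icc ℓ c) := by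
    intro u hu v hv huv
    have hd := hdiff u v hu hv huv
    have h1 : 0 ≤ ∫ y in Icc ℓ u, g y ∂μ :=
      setIntegral_nonneg measurableSet_Icc
        (fun y hy => le_trans ha.le (hga y (Icc_subset_Icc le_rfl hu.2 hy)))
    have h2 : 0 ≤ ∫ y in Ioc u v, (v - y) * g y ∂μ :=
      setIntegral_nonneg measurableSet_Ioc
        (fun y hy => mul_nonneg (by linarith [hy.2])
          (le_trans ha.le (hga y ⟨hu.1.trans hy.1.le, hy.2.trans hv.2⟩)))
    nlinarith [sub_nonneg.2 huv]
  -- convexity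
  have hm2 : ∀ x : ℝ, Measurable (fun t => max (x - t) 0 * g t) :=
    fun x => ((measurable_const.sub measurable_id).max measurable_const).mul hgm
  have hint2 : ∀ x ∈ Icc ℓ c, IntegrableOn (fun t => max (x - t) 0 * g t) (Icc ℓ c) μ := by
    intro x hx
    refine stmt8_int measurableSet_Icc (hm2 x) (D := (c - ℓ) * C0) ?_
    intro t ht
    rw [abs_mul]
    have h1 : |max (x - t) 0| ≤ c - ℓ := by
      rw [abs_of_nonneg (le_max_right _ _)]
      apply max_le (by linarith [hx.2, ht.1]) (by linarith [hx.1, hx.2, ht.1, ht.2])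
    exact mul_le_mul h1 (hC0 t ht) (abs_nonneg _) (by linarith [hx.1, hx.2])
  have hrep : ∀ z ∈ Icc ℓ c, g z = a + ∫ t in Icc ℓ c, max (z - t) 0 * g t ∂μ := by
    intro z hz
    rw [hg z hz]
    congr 1
    have hdisj : Disjoint (Icc ℓ z) (Ioc z c) := by
      rw [Set.disjoint_left]; intro y hy hy'; exact absurd hy.2 (not_le.2 hy'.1)
    have hsplit : Icc ℓ z ∪ Ioc z c = Icc ℓ c := Icc_union_Ioc_eq_Icc hz.1 hz.2
    have hI1 : IntegrableOn (fun t => max (z - t) 0 * g t) (Icc ℓ z) μ :=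
      (hint2 z hz).mono_set (Icc_subset_Icc le_rfl hz.2)
    have hI2 : IntegrableOn (fun t => max (z - t) 0 * g t) (Ioc z c) μ :=
      (hint2 z hz).mono_set (fun y hy => ⟨hz.1.trans hy.1.le, hy.2⟩)
    have e1 : ∫ t in Icc ℓ c, max (z - t) 0 * g t ∂μ =
        ∫ t in Icc ℓ z, max (z - t) 0 * g t ∂μ + ∫ t in Ioc z c, max (z - t) 0 * g t ∂μ := by
      rw [← hsplit]; exact setIntegral_union hdisj measurableSet_Ioc hI1 hI2
    have e2 : ∫ t in Icc ℓ z, max (z - t) 0 * g t ∂μ = ∫ t in Icc ℓ z, (z - t) * g t ∂μ := by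
      apply setIntegral_congr_fun measurableSet_Icc
      intro t ht
      show max (z - t) 0 * g t = (z - t) * g t
      rw [max_eq_left (by linarith [ht.2])]
    have e3 : ∫ t in Ioc z c, max (z - t) 0 * g t ∂μ = 0 := by
      have : ∫ t in Ioc z c, max (z - t) 0 * g t ∂μ = ∫ t in Ioc z c, (0:ℝ) ∂μ := by
        apply setIntegral_congr_fun measurableSet_Ioc
        intro t ht
        show max (z - t) 0 * g t = 0
        rw [max_eq_right (by linarith [ht.1.le]), zero_mul]
      rw [this, integral_zero]
    rw [e1, e2, e3, add_zero]
  refine ⟨hga, hmono, (convex_Icc ℓ c), ?_⟩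
  intro x hx y hy p q hp hq hpq
  simp only [smul_eq_mul]
  have hz : p * x + q * y ∈ Icc ℓ c := (convex_Icc ℓ c) hx hy hp hq hpq
  rw [hrep _ hz, hrep _ hx, hrep _ hy]
  have hIx : IntegrableOn (fun t => p * (max (x - t) 0 * g t)) (Icc ℓ c) μ :=
    (hint2 x hx).const_mul p
  have hIy : IntegrableOn (fun t => q * (max (y - t) 0 * g t)) (Icc ℓ c) μ :=
    (hint2 y hy).const_mul q
  have hmain : ∫ t in Icc ℓ c, max (p * x + q * y - t) 0 * g t ∂μ ≤
      p * ∫ t in Icc ℓ c, max (x - t) 0 * g t ∂μ +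
      q * ∫ t in Icc ℓ c, max (y - t) 0 * g t ∂μ := by
    calc ∫ t in Icc ℓ c, max (p * x + q * y - t) 0 * g t ∂μ
        ≤ ∫ t in Icc ℓ c, (p * (max (x - t) 0 * g t) + q * (max (y - t) 0 * g t)) ∂μ := by
          apply setIntegral_mono_on (hint2 _ hz) (hIx.add hIy) measurableSet_Icc
          intro t ht
          have hgt : 0 ≤ g t := le_trans ha.le (hga t ht)
          have hmx : max (p * x + q * y - t) 0 ≤ p * max (x - t) 0 + q * max (y - t) 0 := by
            apply max_le
            · have h1 : x - t ≤ max (x - t) 0 := le_max_left _ _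
              have h2 : y - t ≤ max (y - t) 0 := le_max_left _ _
              have e : p * x + q * y - t = p * (x - t) + q * (y - t) := by
                linear_combination t * hpq
              rw [e]
              exact add_le_add (mul_le_mul_of_nonneg_left h1 hp)
                (mul_le_mul_of_nonneg_left h2 hq)
            · positivity
          simp only [Pi.add_apply]
          calc max (p * x + q * y - t) 0 * g t
              ≤ (p * max (x - t) 0 + q * max (y - t) 0) * g t :=
                mul_le_mul_of_nonneg_right hmx hgt
            _ = p * (max (x - t) 0 * g t) + q * (max (y - t) 0 * g t) := by ring
      _ = p * ∫ t in Icc ℓ c, max (x - t) 0 * g t ∂μ +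
          q * ∫ t in Icc ℓ c, max (y - t) 0 * g t ∂μ := by
          rw [integral_add hIx hIy, integral_const_mul, integral_const_mul]
  nlinarith [hmain]
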